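/- Let G be a profinite group and g ∈ G, and suppose the set of n-Engel values {[h, g, …, g] (g repeated n times) : h ∈ G} has cardinality strictly smaller than 2^ℵ₀. Then there exist an element s ∈ G, an open normal subgroup N of G, and an element b ∈ G such that [x·b, g, …, g] = s (g repeated n times) for all x ∈ N. -/

import Mathlib

/-- The commutator `[a,b] = a⁻¹b⁻¹ab`. -/
def cmt {G : Type*} [Group G] (a b : G) : G := a⁻¹ * b⁻¹ * a * b

/-- The left-normed iterated commutator `[x, ₙg]` with `n` copies of `g`. -/
def engel {G : Type*} [Group G] (x g : G) : ℕ → G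
  | 0 => x
  | n + 1 => cmt (engel x g n) g

section Aux

variable {G : Type*} [Group G] [TopologicalSpace G] [IsTopologicalGroup G]
  [CompactSpace G] [T2Space G] [TotallyDisconnectedSpace G]

private lemma engel_continuous (g : G) (n : ℕ) : Continuous fun h : G => engel h g n := by
  induction n with
  | zero => exact continuous_id
  | succ n ih =>
      simp only [engel, cmt]
      exact ((ih.inv.mul continuous_const).mul ih).mul continuous_const

/-- The right coset `N b`, as the set `{y | y b⁻¹ ∈ N}`. -/
private def rc {G : Type*} [Group G] (N : Subgroup G) (b : G) : Set G := {y | y * b⁻¹ ∈ N}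

private lemma self_mem_rc {G : Type*} [Group G] (N : Subgroup G) (b : G) : b ∈ rc N b := by
  simp [rc, N.one_mem]

private lemma mul_mem_rc {G : Type*} [Group G] {N : Subgroup G} {x : G} (b : G) (hx : x ∈ N) :
    x * b ∈ rc N b := by
  simpa [rc] using hx

private lemma rc_trans {G : Type*} [Group G] {M N : Subgroup G} {b c : G}
    (hMN : M ≤ N) (hc : c ∈ rc N b) : rc M c ⊆ rc N b := by
  intro y hy
  have h1 : y * c⁻¹ ∈ N := hMN hy
  have := N.mul_mem h1 hc
  simpa [rc, mul_assoc] using this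

private lemma rc_isClosed {N : Subgroup G} (hN : IsOpen (N : Set G)) (b : G) :
    IsClosed (rc N b) := by
  have : rc N b = (fun y => y * b⁻¹) ⁻¹' (N : Set G) := rfl
  rw [this]
  exact (N.isClosed_of_isOpen hN).preimage (continuous_id.mul continuous_const)

private lemma rc_nonempty {G : Type*} [Group G] (N : Subgroup G) (b : G) :
    (rc N b).Nonempty := ⟨b, self_mem_rc N b⟩

/-- Every open neighbourhood of a point contains an open normal coset around it. -/
private lemma exists_rc_subset {U : Set G} (hU : IsOpen U) {b : G} (hb : b ∈ U) :
    ∃ N : Subgroup G, N.Normal ∧ IsOpen (N : Set G) ∧ rc N b ⊆ U := by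
  have hW : IsOpen ((fun y : G => y * b) ⁻¹' U) :=
    hU.preimage (continuous_id.mul continuous_const)
  have h1 : (1 : G) ∈ (fun y : G => y * b) ⁻¹' U := by simpa using hb
  obtain ⟨K, hK, h1K, hKW⟩ := compact_exists_isClopen_in_isOpen hW h1
  obtain ⟨H, hH⟩ := IsTopologicalGroup.exist_openNormalSubgroup_sub_clopen_nhds_of_one hK h1K
  refine ⟨H.toSubgroup, H.isNormal', H.isOpen', ?_⟩
  intro y hy
  have : y * b⁻¹ ∈ (fun y : G => y * b) ⁻¹' U := hKW (hH hy)
  simpa [mul_assoc] using this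

end Aux

/-- If for `g` in a profinite group `G` the set of values `[h, ₙg]` has
cardinality strictly smaller than the continuum, then there are `s ∈ G` and a
coset `Nb` of an open normal subgroup `N` with `[xb, ₙg] = s` for all `x ∈ N`. -/
theorem stmt6 {G : Type*} [Group G] [TopologicalSpace G] [IsTopologicalGroup G]
    [CompactSpace G] [T2Space G] [TotallyDisconnectedSpace G]
    (g : G) (n : ℕ) (hn : 0 < n)
    (hcard : Cardinal.mk {y : G | ∃ h : G, y = engel h g n} < Cardinal.continuum) :
    ∃ (s : G) (N : Subgroup G) (b : G), N.Normal ∧ IsOpen (N : Set G) ∧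
      ∀ x ∈ N, engel (x * b) g n = s := by
  by_contra hcon
  push_neg at hcon
  set f : G → G := fun h => engel h g n with hf_def
  have hf : Continuous f := engel_continuous g n
  -- on every open normal coset, `f` is non-constant
  have hnc : ∀ (N : Subgroup G) (b : G), N.Normal → IsOpen (N : Set G) →
      ∃ c ∈ rc N b, f c ≠ f b := by
    intro N b hNn hNo
    obtain ⟨x, hxN, hx⟩ := hcon (f b) N b hNn hNo
    exact ⟨x * b, mul_mem_rc b hxN, hx⟩
  -- the splitting step
  let P := {p : Subgroup G × G // p.1.Normal ∧ IsOpen ((p.1 : Subgroup G) : Set G)}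
  have hsplit : ∀ p : P, ∃ q0 q1 : P,
      rc q0.1.1 q0.1.2 ⊆ rc p.1.1 p.1.2 ∧ rc q1.1.1 q1.1.2 ⊆ rc p.1.1 p.1.2 ∧
      ∀ y0 ∈ rc q0.1.1 q0.1.2, ∀ y1 ∈ rc q1.1.1 q1.1.2, f y0 ≠ f y1 := by
    rintro ⟨⟨N, b⟩, hNn, hNo⟩
    obtain ⟨c, hc, hfc⟩ := hnc N b hNn hNo
    obtain ⟨U, V, hUo, hVo, hbU, hcV, hUV⟩ := t2_separation hfc.symm
    obtain ⟨N0, hN0n, hN0o, hN0⟩ := exists_rc_subset (hf.isOpen_preimage U hUo)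
      (show b ∈ f ⁻¹' U from hbU)
    obtain ⟨N1, hN1n, hN1o, hN1⟩ := exists_rc_subset (hf.isOpen_preimage V hVo)
      (show c ∈ f ⁻¹' V from hcV)
    have hMn : (N ⊓ N0 ⊓ N1).Normal := by
      constructor
      intro x hx y
      exact ⟨⟨hNn.conj_mem _ hx.1.1 y, hN0n.conj_mem _ hx.1.2 y⟩, hN1n.conj_mem _ hx.2 y⟩
    have hMo : IsOpen ((N ⊓ N0 ⊓ N1 : Subgroup G) : Set G) := by
      have : ((N ⊓ N0 ⊓ N1 : Subgroup G) : Set G) = (N : Set G) ∩ N0 ∩ N1 := by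
        ext y; simp [Subgroup.mem_inf, Set.mem_inter_iff]
      rw [this]
      exact (hNo.inter hN0o).inter hN1o
    refine ⟨⟨⟨N ⊓ N0 ⊓ N1, b⟩, hMn, hMo⟩, ⟨⟨N ⊓ N0 ⊓ N1, c⟩, hMn, hMo⟩, ?_, ?_, ?_⟩
    · exact rc_trans (le_trans inf_le_left inf_le_left) (self_mem_rc N b)
    · exact rc_trans (le_trans inf_le_left inf_le_left) hc
    · intro y0 hy0 y1 hy1
      have h0 : f y0 ∈ U :=
        hN0 (rc_trans (le_trans inf_le_left inf_le_right) (self_mem_rc N0 b) hy0)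
      have h1 : f y1 ∈ V := hN1 (rc_trans inf_le_right (self_mem_rc N1 c) hy1)
      intro hEq
      exact Set.disjoint_left.1 hUV h0 (hEq ▸ h1)
  choose q0 q1 hq0 hq1 hqd using hsplit
  -- the tree of cosets
  have htop : (⊤ : Subgroup G).Normal ∧ IsOpen (((⊤ : Subgroup G) : Subgroup G) : Set G) :=
    ⟨inferInstance, by simp⟩
  let D : (ℕ → Bool) → ℕ → P := fun α k =>
    Nat.rec ⟨⟨⊤, 1⟩, htop⟩ (fun k p => if α k then q1 p else q0 p) k
  let C : (ℕ → Bool) → ℕ → Set G := fun α k => rc (D α k).1.1 (D α k).1.2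
  have hDsucc : ∀ α k, D α (k + 1) = if α k then q1 (D α k) else q0 (D α k) := fun α k => rfl
  have hCsub : ∀ α k, C α (k + 1) ⊆ C α k := by
    intro α k
    show rc (D α (k+1)).1.1 (D α (k+1)).1.2 ⊆ _
    rw [hDsucc]
    cases hak : α k
    · simpa [hak] using hq0 (D α k)
    · simpa [hak] using hq1 (D α k)
  have hCclosed : ∀ α k, IsClosed (C α k) := fun α k => rc_isClosed (D α k).2.2 _
  have hCne : ∀ α k, (C α k).Nonempty := fun α k => rc_nonempty _ _
  -- agreement
  have hagree : ∀ (k : ℕ) (α β : ℕ → Bool), (∀ i < k, α i = β i) → D α k = D β k := by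
    intro k
    induction k with
    | zero => intro α β _; rfl
    | succ k ih =>
        intro α β h
        rw [hDsucc, hDsucc, ih α β (fun i hi => h i (Nat.lt_succ_of_lt hi)),
          h k (Nat.lt_succ_self k)]
  -- pick a point on each branch
  have hx : ∀ α : ℕ → Bool, ∃ x : G, ∀ k, x ∈ C α k := by
    intro α
    have := IsCompact.nonempty_iInter_of_sequence_nonempty_isCompact_isClosed (C α)
      (hCsub α) (hCne α) (IsCompact.of_isClosed_subset isCompact_univ (hCclosed α 0)
        (Set.subset_univ _)) (hCclosed α)
    obtain ⟨x, hx⟩ := this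
    exact ⟨x, fun k => Set.mem_iInter.1 hx k⟩
  choose x hxmem using hx
  -- injectivity
  have hinj : Function.Injective fun α : ℕ → Bool => f (x α) := by
    intro α β hEq
    by_contra hne
    have hex : ∃ k, α k ≠ β k := Function.ne_iff.1 hne
    set k := Nat.find hex with hk
    have hkne : α k ≠ β k := Nat.find_spec hex
    have hklt : ∀ i < k, α i = β i := fun i hi => not_not.1 (Nat.find_min hex hi)
    have hDk : D α k = D β k := hagree k α β hklt
    have hxa : x α ∈ C α (k + 1) := hxmem α (k + 1)
    have hxb : x β ∈ C β (k + 1) := hxmem β (k + 1)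
    rw [show C α (k+1) = rc (D α (k+1)).1.1 (D α (k+1)).1.2 from rfl, hDsucc] at hxa
    rw [show C β (k+1) = rc (D β (k+1)).1.1 (D β (k+1)).1.2 from rfl, hDsucc, ← hDk] at hxb
    cases hak : α k
    · have hbk : β k = true := by
        cases hbk : β k
        · exact absurd (hak.trans hbk.symm) hkne
        · rfl
      rw [hak] at hxa; rw [hbk] at hxb
      simp only [if_false, if_true] at hxa hxb
      exact hqd (D α k) _ hxa _ hxb hEq
    · have hbk : β k = false := by
        cases hbk : β k
        · rfl
        · exact absurd (hak.trans hbk.symm) hkne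
      rw [hak] at hxa; rw [hbk] at hxb
      simp only [if_false, if_true] at hxa hxb
      exact hqd (D α k) _ hxb _ hxa hEq.symm
  -- cardinality contradiction
  have hcont : Cardinal.continuum ≤ Cardinal.mk {y : G | ∃ h : G, y = engel h g n} := by
    have hF : Function.Injective
        (fun α : ULift.{_} (ℕ → Bool) =>
          (⟨f (x α.down), ⟨x α.down, rfl⟩⟩ : {y : G | ∃ h : G, y = engel h g n})) := by
      intro a b hab
      have : f (x a.down) = f (x b.down) := congrArg Subtype.val hab
      exact ULift.ext a b (hinj this)
    have hle := Cardinal.mk_le_of_injective hF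
    have hmk : Cardinal.mk (ULift.{_} (ℕ → Bool)) = Cardinal.continuum := by
      rw [Cardinal.mk_uLift, ← Cardinal.power_def, Cardinal.mk_bool, Cardinal.mk_nat,
        Cardinal.two_power_aleph0, Cardinal.lift_continuum]
    rwa [hmk] at hle
  exact absurd hcard (not_lt.2 hcont)
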